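/- arXiv:2507.05526 — 3 statements merged into one kernel-verified Lean document; each statement's English description precedes it below -/
import Mathlib

section
/- For any ν > 0 and real numbers A, B, C with C·A² > B², the integral over ℝ of dx/(A²x² − 2Bx + C)^((ν+1)/2) equals √π · Γ(ν/2)/Γ((ν+1)/2) · (A²)^((ν−1)/2)/(C·A² − B²)^(ν/2). -/
open Real MeasureTheory

open Set in
private lemma aux_integrable {s : ℝ} (hs : 1/2 < s) :
    Integrable (fun x : ℝ => (1 + x ^ 2) ^ (-s)) := by
  have h := integrable_rpow_neg_one_add_norm_sq (E := ℝ) (μ := volume) (r := 2*s)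
    (by simpa using by linarith)
  simpa [Real.norm_eq_abs, sq_abs, neg_div, mul_div_assoc, mul_div_cancel_left₀] using h

open Set in
private lemma aux_slice (s : ℝ) (hs : 0 < s) (b : ℝ) (hb : 0 < b) :
    ∫ t in Ioi (0:ℝ), t ^ (s - 1) * Real.exp (-b * t) = b ^ (-s) * Real.Gamma s := by
  have h := integral_rpow_mul_exp_neg_mul_rpow (p := 1) (q := s - 1) (b := b)
    one_pos (by linarith) hb
  simpa using h

open Set in
private lemma aux_core (s : ℝ) (hs : 1/2 < s) :
    (∫ x : ℝ, (1 + x ^ 2) ^ (-s)) = Real.sqrt π * (Real.Gamma (s - 1/2) / Real.Gamma s) := by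
  have hs0 : 0 < s := by linarith
  have hΓ : 0 < Real.Gamma s := Real.Gamma_pos_of_pos hs0
  set f : ℝ → ℝ → ℝ := fun x t => t ^ (s - 1) * Real.exp (-(1 + x ^ 2) * t) with hf
  have hb : ∀ x : ℝ, (0:ℝ) < 1 + x ^ 2 := fun x => by positivity
  have hslice : ∀ x : ℝ, ∫ t in Ioi (0:ℝ), f x t = (1 + x ^ 2) ^ (-s) * Real.Gamma s :=
    fun x => aux_slice s hs0 _ (hb x)
  have hislice : ∀ x : ℝ, IntegrableOn (fun t => f x t) (Ioi 0) := by
    intro x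
    have h := integrableOn_rpow_mul_exp_neg_mul_rpow (p := 1) (s := s - 1) (b := 1 + x ^ 2)
      (by linarith) one_pos (hb x)
    have he : (fun t : ℝ => t ^ (s-1) * Real.exp (-(1 + x ^ 2) * t ^ (1:ℝ))) = fun t => f x t := by
      funext t; rw [Real.rpow_one]
    rw [← he]; exact h
  have hfnn : ∀ x : ℝ, ∀ t ∈ Ioi (0:ℝ), 0 ≤ f x t := by
    intro x t ht
    have h0 : (0:ℝ) ≤ t := le_of_lt ht
    have : (0:ℝ) ≤ t ^ (s-1) := Real.rpow_nonneg h0 _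
    positivity
  have hnormint : ∀ x : ℝ, (∫ t in Ioi (0:ℝ), ‖f x t‖) = (1 + x ^ 2) ^ (-s) * Real.Gamma s := by
    intro x
    rw [← hslice x]
    exact setIntegral_congr_fun measurableSet_Ioi fun t ht => Real.norm_of_nonneg (hfnn x t ht)
  have hint : Integrable (Function.uncurry f) (volume.prod (volume.restrict (Ioi 0))) := by
    rw [MeasureTheory.integrable_prod_iff]
    · refine ⟨Filter.Eventually.of_forall fun x => hislice x, ?_⟩
      have : (fun x : ℝ => ∫ t in Ioi (0:ℝ), ‖f x t‖)
          = fun x : ℝ => (1 + x ^ 2) ^ (-s) * Real.Gamma s := funext fun x => hnormint x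
      rw [show (fun x : ℝ => ∫ y in Ioi (0:ℝ), ‖Function.uncurry f (x, y)‖)
          = fun x : ℝ => (1 + x ^ 2) ^ (-s) * Real.Gamma s from this]
      exact (aux_integrable hs).mul_const _
    · exact Measurable.aestronglyMeasurable (by fun_prop)
  have hswap : (∫ x : ℝ, ∫ t in Ioi (0:ℝ), f x t) = ∫ t in Ioi (0:ℝ), ∫ x : ℝ, f x t :=
    MeasureTheory.integral_integral_swap hint
  have hinner : ∀ t ∈ Ioi (0:ℝ), (∫ x : ℝ, f x t)
      = Real.sqrt π * (Real.exp (-t) * t ^ (s - 1/2 - 1)) := by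
    intro t ht
    have ht' : (0:ℝ) < t := ht
    have e1 : (∫ x : ℝ, f x t) = ∫ x : ℝ, (t ^ (s-1) * Real.exp (-t)) * Real.exp (-t * x ^ 2) := by
      congr 1; funext x
      rw [hf]; simp only []
      rw [mul_assoc, ← Real.exp_add]
      congr 2; ring
    rw [e1, MeasureTheory.integral_const_mul, integral_gaussian]
    have h1 : Real.sqrt (π / t) = Real.sqrt π * t ^ (-(1/2) : ℝ) := by
      rw [show π / t = π * t⁻¹ by ring, Real.sqrt_mul Real.pi_nonneg, Real.sqrt_inv,
        Real.sqrt_eq_rpow t, ← Real.rpow_neg ht'.le]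
    have h2 : t ^ (s - 1/2 - 1) = t ^ (s-1) * t ^ (-(1/2) : ℝ) := by
      rw [← Real.rpow_add ht']; ring_nf
    rw [h1, h2]; ring
  have lhs_eq : (∫ x : ℝ, ∫ t in Ioi (0:ℝ), f x t)
      = Real.Gamma s * ∫ x : ℝ, (1 + x ^ 2) ^ (-s) := by
    simp_rw [hslice]
    rw [MeasureTheory.integral_mul_const]; ring
  have rhs_eq : (∫ t in Ioi (0:ℝ), ∫ x : ℝ, f x t)
      = Real.sqrt π * Real.Gamma (s - 1/2) := by
    rw [setIntegral_congr_fun measurableSet_Ioi hinner, MeasureTheory.integral_const_mul,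
      ← Real.Gamma_eq_integral (by linarith : (0:ℝ) < s - 1/2)]
  have hkey := lhs_eq.symm.trans (hswap.trans rhs_eq)
  rw [← mul_div_assoc, eq_div_iff hΓ.ne']
  linear_combination hkey

/-- Gamma-integral lemma. -/
theorem stmt_0 (ν A B C : ℝ) (hν : 0 < ν) (hA : A ≠ 0) (h : B ^ 2 < C * A ^ 2) :
    (∫ x : ℝ, (A ^ 2 * x ^ 2 - 2 * B * x + C) ^ (-((ν + 1) / 2))) =
      Real.sqrt Real.pi * (Real.Gamma (ν / 2) / Real.Gamma ((ν + 1) / 2)) *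
        ((A ^ 2) ^ ((ν - 1) / 2) / (C * A ^ 2 - B ^ 2) ^ (ν / 2)) := by
  have ha : (0:ℝ) < A ^ 2 := by positivity
  have hP : (0:ℝ) < C * A ^ 2 - B ^ 2 := by linarith
  set s : ℝ := (ν + 1) / 2 with hsdef
  have hs : 1/2 < s := by rw [hsdef]; linarith
  set d : ℝ := (C * A ^ 2 - B ^ 2) / A ^ 2 with hd
  have hdpos : (0:ℝ) < d := div_pos hP ha
  set k : ℝ := |A| / Real.sqrt d with hkdef
  have hkpos : (0:ℝ) < k := div_pos (abs_pos.mpr hA) (Real.sqrt_pos.mpr hdpos)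
  have hk2 : d * k ^ 2 = A ^ 2 := by
    rw [hkdef, div_pow, sq_abs, Real.sq_sqrt hdpos.le]
    field_simp
  set m : ℝ := B / A ^ 2 with hm
  have hQ : ∀ x : ℝ, A ^ 2 * x ^ 2 - 2 * B * x + C = d * (1 + (k * (x - m)) ^ 2) := by
    intro x
    have e : d * (1 + (k * (x - m)) ^ 2) = d + (d * k ^ 2) * (x - m) ^ 2 := by ring
    rw [e, hk2, hd, hm]
    field_simp
    ring
  have e2 : ∀ x : ℝ, (A ^ 2 * x ^ 2 - 2 * B * x + C) ^ (-s)
      = d ^ (-s) * (1 + (k * (x - m)) ^ 2) ^ (-s) := by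
    intro x
    rw [hQ x, Real.mul_rpow hdpos.le (by positivity)]
  calc (∫ x : ℝ, (A ^ 2 * x ^ 2 - 2 * B * x + C) ^ (-s))
      = ∫ x : ℝ, d ^ (-s) * (1 + (k * (x - m)) ^ 2) ^ (-s) := by simp_rw [e2]
    _ = d ^ (-s) * ∫ x : ℝ, (fun y : ℝ => (1 + (k * y) ^ 2) ^ (-s)) (x - m) := by
        rw [MeasureTheory.integral_const_mul]
    _ = d ^ (-s) * ∫ y : ℝ, (fun z : ℝ => (1 + z ^ 2) ^ (-s)) (k * y) := by
        rw [MeasureTheory.integral_sub_right_eq_self (fun y : ℝ => (1 + (k * y) ^ 2) ^ (-s)) m]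
    _ = d ^ (-s) * (|k⁻¹| * ∫ z : ℝ, (1 + z ^ 2) ^ (-s)) := by
        rw [MeasureTheory.Measure.integral_comp_mul_left (fun z : ℝ => (1 + z ^ 2) ^ (-s)) k]
        simp [smul_eq_mul]
    _ = (d ^ (-s) * k⁻¹) * ∫ z : ℝ, (1 + z ^ 2) ^ (-s) := by
        rw [abs_of_pos (inv_pos.mpr hkpos)]; ring
    _ = (d ^ (-s) * k⁻¹) * (Real.sqrt π * (Real.Gamma (s - 1/2) / Real.Gamma s)) := by
        rw [aux_core s hs]
    _ = Real.sqrt Real.pi * (Real.Gamma (ν / 2) / Real.Gamma ((ν + 1) / 2)) *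
        ((A ^ 2) ^ ((ν - 1) / 2) / (C * A ^ 2 - B ^ 2) ^ (ν / 2)) := by
        have hsν : s - 1/2 = ν / 2 := by rw [hsdef]; ring
        have key : d ^ (-s) * k⁻¹
            = (A ^ 2) ^ ((ν - 1) / 2) / (C * A ^ 2 - B ^ 2) ^ (ν / 2) := by
          have h1 : d ^ (-s) * k⁻¹ = d ^ (-(ν/2)) / Real.sqrt (A ^ 2) := by
            rw [hkdef, inv_div, ← Real.sqrt_sq_eq_abs, Real.sqrt_eq_rpow d, mul_div_assoc',
              ← Real.rpow_add hdpos, show -s + 1/2 = -(ν/2) by rw [hsdef]; ring]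
          have h2 : d ^ (-(ν/2)) = (A ^ 2) ^ (ν/2) / (C * A ^ 2 - B ^ 2) ^ (ν/2) := by
            rw [hd, Real.rpow_neg (div_nonneg hP.le ha.le), Real.div_rpow hP.le ha.le, inv_div]
          rw [h1, h2, Real.sqrt_eq_rpow (A ^ 2), show (ν-1)/2 = ν/2 - 1/2 by ring,
            Real.rpow_sub ha]
          ring
        rw [hsν, ← hsdef, key]
        ring
end

section
/- In the identifiable two-node linear Gaussian BCM, the posterior interventional distribution p(X₁ = y | do(X₂ = x), D) equals the two-component Gaussian mixture p(G₁|D)·N(y | μ(x), s²(x)) + (1 − p(G₁|D))·N(y | 0, σ²), where μ(x) = σ_w² S₁₂ x/(σ_w² S₂ + σ²) and s²(x) = σ²(1 + σ_w² x²/(σ_w² S₂ + σ²)). -/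
open Real MeasureTheory

/-- Gaussian density with mean `m` and variance `v`. -/
noncomputable def gpdf (m v x : ℝ) : ℝ :=
  (Real.sqrt (2 * Real.pi * v))⁻¹ * Real.exp (-(x - m) ^ 2 / (2 * v))

lemma gpdf_pos (m v x : ℝ) (hv : 0 < v) : 0 < gpdf m v x := by
  unfold gpdf
  have h : 0 < 2 * Real.pi * v := by positivity
  positivity

lemma gpdf_nonneg (m v x : ℝ) : 0 ≤ gpdf m v x := by
  unfold gpdf; positivity

lemma gauss_int (A B : ℝ) (hA : 0 < A) :
    ∫ w : ℝ, Real.exp (-A * w ^ 2 + B * w)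
      = Real.sqrt (π / A) * Real.exp (B ^ 2 / (4 * A)) := by
  have h : ∀ w : ℝ, -A * w ^ 2 + B * w
      = -A * (w - B / (2 * A)) ^ 2 + B ^ 2 / (4 * A) := by
    intro w; field_simp; ring
  calc ∫ w : ℝ, Real.exp (-A * w ^ 2 + B * w)
      = ∫ w : ℝ, Real.exp (-A * (w - B / (2 * A)) ^ 2) * Real.exp (B ^ 2 / (4 * A)) := by
        simp_rw [h, Real.exp_add]
    _ = (∫ w : ℝ, Real.exp (-A * (w - B / (2 * A)) ^ 2)) * Real.exp (B ^ 2 / (4 * A)) :=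
        integral_mul_const _ _
    _ = _ := by
        rw [integral_sub_right_eq_self (fun w => Real.exp (-A * w ^ 2)) (B / (2 * A)),
          integral_gaussian]

lemma gpdf_shift (σ a c w : ℝ) (hσ : 0 < σ) :
    gpdf (w * c) (σ ^ 2) a
      = gpdf 0 (σ ^ 2) a * Real.exp (c ^ 2 * (-(w ^ 2) / (2 * σ ^ 2)) + a * c * (w / σ ^ 2)) := by
  unfold gpdf
  have hmm : ∀ (u s t : ℝ), u * Real.exp s * Real.exp t = u * Real.exp (s + t) := by
    intro u s t; rw [mul_assoc, ← Real.exp_add]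
  rw [hmm]
  congr 2
  field_simp
  ring

lemma key_id (σ σw S2 S12 x y : ℝ) (hσ : 0 < σ) (hσw : 0 < σw) (hS2 : 0 ≤ S2) :
    gpdf 0 (σ ^ 2) y *
        (Real.sqrt (π / (1 / (2 * σw ^ 2) + S2 / (2 * σ ^ 2) + x ^ 2 / (2 * σ ^ 2))) *
          Real.exp ((S12 / σ ^ 2 + y * x / σ ^ 2) ^ 2 /
            (4 * (1 / (2 * σw ^ 2) + S2 / (2 * σ ^ 2) + x ^ 2 / (2 * σ ^ 2)))))
      = Real.sqrt (π / (1 / (2 * σw ^ 2) + S2 / (2 * σ ^ 2))) *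
          Real.exp ((S12 / σ ^ 2) ^ 2 / (4 * (1 / (2 * σw ^ 2) + S2 / (2 * σ ^ 2)))) *
        gpdf (σw ^ 2 * S12 * x / (σw ^ 2 * S2 + σ ^ 2))
          (σ ^ 2 * (1 + σw ^ 2 * x ^ 2 / (σw ^ 2 * S2 + σ ^ 2))) y := by
  have hπ : (0:ℝ) < π := Real.pi_pos
  have hA : (0:ℝ) < 1 / (2 * σw ^ 2) + S2 / (2 * σ ^ 2) := by positivity
  have hA' : (0:ℝ) < 1 / (2 * σw ^ 2) + S2 / (2 * σ ^ 2) + x ^ 2 / (2 * σ ^ 2) := by positivity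
  have hD : (0:ℝ) < σw ^ 2 * S2 + σ ^ 2 := by positivity
  have hs : (0:ℝ) < σ ^ 2 * (1 + σw ^ 2 * x ^ 2 / (σw ^ 2 * S2 + σ ^ 2)) := by positivity
  have hσ' : σ ≠ 0 := ne_of_gt hσ
  have hσw' : σw ≠ 0 := ne_of_gt hσw
  have hA0 := ne_of_gt hA
  have hA'0 := ne_of_gt hA'
  have hD0 := ne_of_gt hD
  have hs0 := ne_of_gt hs
  unfold gpdf
  have hmm : ∀ (a b c d : ℝ), (a * Real.exp b) * (c * Real.exp d) = (a * c) * Real.exp (b + d) := by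
    intro a b c d; rw [Real.exp_add]; ring
  rw [hmm, hmm]
  have hK : (Real.sqrt (2 * π * σ ^ 2))⁻¹ *
      Real.sqrt (π / (1 / (2 * σw ^ 2) + S2 / (2 * σ ^ 2) + x ^ 2 / (2 * σ ^ 2)))
      = Real.sqrt (π / (1 / (2 * σw ^ 2) + S2 / (2 * σ ^ 2))) *
        (Real.sqrt (2 * π * (σ ^ 2 * (1 + σw ^ 2 * x ^ 2 / (σw ^ 2 * S2 + σ ^ 2)))))⁻¹ := by
    rw [← Real.sqrt_inv, ← Real.sqrt_inv, ← Real.sqrt_mul (by positivity),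
      ← Real.sqrt_mul (by positivity)]
    congr 1
    field_simp
    ring
  rw [hK]
  congr 2
  field_simp
  ring

/-- posterior interventional distribution in the identifiable
two-node linear Gaussian BCM is a two-component Gaussian mixture. -/
theorem stmt_6 (n : ℕ) (X1 X2 : Fin n → ℝ) (σ σw : ℝ) (hσ : 0 < σ) (hσw : 0 < σw)
    (x : ℝ) :
    let S2 := ∑ i, X2 i ^ 2
    let S12 := ∑ i, X1 i * X2 i
    -- marginal likelihoods of the three graphs
    let L1 := ∫ w : ℝ, gpdf 0 (σw ^ 2) w *
        ∏ i, gpdf (w * X2 i) (σ ^ 2) (X1 i) * gpdf 0 (σ ^ 2) (X2 i)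
    let L2 := ∫ w : ℝ, gpdf 0 (σw ^ 2) w *
        ∏ i, gpdf (w * X1 i) (σ ^ 2) (X2 i) * gpdf 0 (σ ^ 2) (X1 i)
    let L3 := ∏ i, gpdf 0 (σ ^ 2) (X1 i) * gpdf 0 (σ ^ 2) (X2 i)
    -- posterior probability of graph G₁ (uniform graph prior)
    let p1 := L1 / (L1 + L2 + L3)
    -- posterior interventional density of X₁ under do(X₂ = x)
    let postInt : ℝ → ℝ := fun y =>
      ((∫ w : ℝ, gpdf (w * x) (σ ^ 2) y * (gpdf 0 (σw ^ 2) w *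
          ∏ i, gpdf (w * X2 i) (σ ^ 2) (X1 i) * gpdf 0 (σ ^ 2) (X2 i))) +
        (L2 + L3) * gpdf 0 (σ ^ 2) y) / (L1 + L2 + L3)
    let μx := σw ^ 2 * S12 * x / (σw ^ 2 * S2 + σ ^ 2)
    let s2x := σ ^ 2 * (1 + σw ^ 2 * x ^ 2 / (σw ^ 2 * S2 + σ ^ 2))
    ∀ y : ℝ, postInt y = p1 * gpdf μx s2x y + (1 - p1) * gpdf 0 (σ ^ 2) y := by
  intro S2 S12 L1 L2 L3 p1 postInt μx s2x y
  have hσ2 : (0:ℝ) < σ ^ 2 := by positivity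
  have hσw2 : (0:ℝ) < σw ^ 2 := by positivity
  have hS2 : 0 ≤ S2 := by simp only [S2]; positivity
  have hπ : (0:ℝ) < π := Real.pi_pos
  have hA : (0:ℝ) < 1 / (2 * σw ^ 2) + S2 / (2 * σ ^ 2) := by positivity
  have hA' : (0:ℝ) < 1 / (2 * σw ^ 2) + S2 / (2 * σ ^ 2) + x ^ 2 / (2 * σ ^ 2) := by positivity
  -- rewrite the product over data as a Gaussian in w
  have hprod : ∀ w : ℝ,
      (∏ i, gpdf (w * X2 i) (σ ^ 2) (X1 i) * gpdf 0 (σ ^ 2) (X2 i))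
        = L3 * Real.exp (S2 * (-(w ^ 2) / (2 * σ ^ 2)) + S12 * (w / σ ^ 2)) := by
    intro w
    simp only [L3, S2, S12]
    calc (∏ i, gpdf (w * X2 i) (σ ^ 2) (X1 i) * gpdf 0 (σ ^ 2) (X2 i))
        = ∏ i, (gpdf 0 (σ ^ 2) (X1 i) * gpdf 0 (σ ^ 2) (X2 i)) *
            Real.exp ((X2 i) ^ 2 * (-(w ^ 2) / (2 * σ ^ 2)) + X1 i * X2 i * (w / σ ^ 2)) := by
          refine Finset.prod_congr rfl fun i _ => ?_
          rw [gpdf_shift σ (X1 i) (X2 i) w hσ]; ring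
      _ = (∏ i, gpdf 0 (σ ^ 2) (X1 i) * gpdf 0 (σ ^ 2) (X2 i)) *
            ∏ i, Real.exp ((X2 i) ^ 2 * (-(w ^ 2) / (2 * σ ^ 2)) + X1 i * X2 i * (w / σ ^ 2)) :=
          Finset.prod_mul_distrib
      _ = _ := by
          rw [← Real.exp_sum]
          congr 1
          rw [Finset.sum_add_distrib, ← Finset.sum_mul, ← Finset.sum_mul]
  -- closed form of L1
  have hint1 : (fun w : ℝ => gpdf 0 (σw ^ 2) w *
      ∏ i, gpdf (w * X2 i) (σ ^ 2) (X1 i) * gpdf 0 (σ ^ 2) (X2 i))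
      = fun w : ℝ => (Real.sqrt (2 * π * σw ^ 2))⁻¹ * L3 *
          Real.exp (-(1 / (2 * σw ^ 2) + S2 / (2 * σ ^ 2)) * w ^ 2 + (S12 / σ ^ 2) * w) := by
    funext w
    rw [hprod w]
    unfold gpdf
    rw [show ∀ (a b c d : ℝ), (a * Real.exp b) * (c * Real.exp d) = (a * c) * Real.exp (b + d)
      from fun a b c d => by rw [Real.exp_add]; ring]
    congr 2
    field_simp
    ring
  have hL1 : L1 = (Real.sqrt (2 * π * σw ^ 2))⁻¹ * L3 *
      (Real.sqrt (π / (1 / (2 * σw ^ 2) + S2 / (2 * σ ^ 2))) *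
        Real.exp ((S12 / σ ^ 2) ^ 2 / (4 * (1 / (2 * σw ^ 2) + S2 / (2 * σ ^ 2))))) := by
    simp only [L1]
    rw [hint1, integral_const_mul, gauss_int _ _ hA]
  -- closed form of the interventional integral
  have hint2 : (fun w : ℝ => gpdf (w * x) (σ ^ 2) y * (gpdf 0 (σw ^ 2) w *
      ∏ i, gpdf (w * X2 i) (σ ^ 2) (X1 i) * gpdf 0 (σ ^ 2) (X2 i)))
      = fun w : ℝ => gpdf 0 (σ ^ 2) y * ((Real.sqrt (2 * π * σw ^ 2))⁻¹ * L3) *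
          Real.exp (-(1 / (2 * σw ^ 2) + S2 / (2 * σ ^ 2) + x ^ 2 / (2 * σ ^ 2)) * w ^ 2 +
            (S12 / σ ^ 2 + y * x / σ ^ 2) * w) := by
    funext w
    rw [gpdf_shift σ y x w hσ, hprod w]
    unfold gpdf
    have hmm7 : ∀ (a b c d e f g : ℝ),
        (a * Real.exp b * Real.exp c) * (d * Real.exp e * (f * Real.exp g)) =
          (a * (d * f)) * Real.exp (b + c + e + g) := by
      intro a b c d e f g
      rw [Real.exp_add, Real.exp_add, Real.exp_add]; ring
    have hmm8 : ∀ (a b c d : ℝ), a * Real.exp b * c * Real.exp d = a * c * Real.exp (b + d) := by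
      intro a b c d; rw [Real.exp_add]; ring
    rw [hmm7, hmm8]
    congr 1
    rw [Real.exp_eq_exp]
    field_simp
    ring
  have hI : (∫ w : ℝ, gpdf (w * x) (σ ^ 2) y * (gpdf 0 (σw ^ 2) w *
      ∏ i, gpdf (w * X2 i) (σ ^ 2) (X1 i) * gpdf 0 (σ ^ 2) (X2 i)))
      = L1 * gpdf μx s2x y := by
    rw [hint2, integral_const_mul, gauss_int _ _ hA', hL1]
    have hk := key_id σ σw S2 S12 x y hσ hσw hS2
    simp only [μx, s2x]
    calc gpdf 0 (σ ^ 2) y * ((Real.sqrt (2 * π * σw ^ 2))⁻¹ * L3) *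
          (Real.sqrt (π / (1 / (2 * σw ^ 2) + S2 / (2 * σ ^ 2) + x ^ 2 / (2 * σ ^ 2))) *
            Real.exp ((S12 / σ ^ 2 + y * x / σ ^ 2) ^ 2 /
              (4 * (1 / (2 * σw ^ 2) + S2 / (2 * σ ^ 2) + x ^ 2 / (2 * σ ^ 2)))))
        = ((Real.sqrt (2 * π * σw ^ 2))⁻¹ * L3) *
            (gpdf 0 (σ ^ 2) y *
              (Real.sqrt (π / (1 / (2 * σw ^ 2) + S2 / (2 * σ ^ 2) + x ^ 2 / (2 * σ ^ 2))) *
                Real.exp ((S12 / σ ^ 2 + y * x / σ ^ 2) ^ 2 /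
                  (4 * (1 / (2 * σw ^ 2) + S2 / (2 * σ ^ 2) + x ^ 2 / (2 * σ ^ 2)))))) := by ring
      _ = _ := by rw [hk]; ring
  -- positivity of the normalising constant
  have hL3 : 0 < L3 := by
    simp only [L3]
    exact Finset.prod_pos fun i _ => mul_pos (gpdf_pos _ _ _ hσ2) (gpdf_pos _ _ _ hσ2)
  have hL1nn : 0 ≤ L1 := by
    simp only [L1]
    refine integral_nonneg fun w => mul_nonneg (gpdf_nonneg _ _ _) ?_
    exact Finset.prod_nonneg fun i _ => mul_nonneg (gpdf_nonneg _ _ _) (gpdf_nonneg _ _ _)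
  have hL2nn : 0 ≤ L2 := by
    simp only [L2]
    refine integral_nonneg fun w => mul_nonneg (gpdf_nonneg _ _ _) ?_
    exact Finset.prod_nonneg fun i _ => mul_nonneg (gpdf_nonneg _ _ _) (gpdf_nonneg _ _ _)
  have hT : (0:ℝ) < L1 + L2 + L3 := by linarith
  have hT0 : L1 + L2 + L3 ≠ 0 := ne_of_gt hT
  -- assemble
  simp only [postInt, p1]
  have h1p : (1 : ℝ) - L1 / (L1 + L2 + L3) = (L2 + L3) / (L1 + L2 + L3) := by
    rw [eq_div_iff hT0, sub_mul, div_mul_cancel₀ _ hT0]; ring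
  rw [hI, h1p, div_mul_eq_mul_div, div_mul_eq_mul_div, add_div]
end

section
/- For the non-identifiable two-node model, the marginal likelihood under graph G₁ equals (2β)^{2α−1/2} Γ(α+(n−1)/2) Γ(α+n/2) / (√η πⁿ Γ(α) Γ(α−1/2)) · (S₂ + 1/η)^{(ν−1)/2} / ((S₂ + 2β)^{(ν−1)/2} · ((S₁ + 2β)(S₂ + 1/η) − S₁₂²)^{ν/2}), where ν = 2α + n. -/
open Real MeasureTheory

/-- Inverse-gamma density with shape `a` and scale `b`. -/
noncomputable def invGammaPdf (a b t : ℝ) : ℝ :=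
  b ^ a / Real.Gamma a * t ^ (-a - 1) * Real.exp (-b / t)

section Helpers
open Set

lemma scaled_gamma_integrable {a c : ℝ} (ha : 0 < a) (hc : 0 < c) :
    IntegrableOn (fun t : ℝ => t ^ (a - 1) * Real.exp (-(c * t))) (Ioi 0) := by
  have h0 := Real.GammaIntegral_convergent ha
  have h1 : IntegrableOn (fun x : ℝ => Real.exp (-(c * x)) * (c * x) ^ (a - 1)) (Ioi 0) := by
    have := (integrableOn_Ioi_comp_mul_left_iff
      (fun x : ℝ => Real.exp (-x) * x ^ (a - 1)) 0 hc).2 (by simpa using h0)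
    simpa using this
  have h2 : IntegrableOn (fun x : ℝ => c ^ (a-1) * (x ^ (a - 1) * Real.exp (-(c * x)))) (Ioi 0) := by
    refine h1.congr_fun (fun x hx => ?_) measurableSet_Ioi
    dsimp only
    rw [Real.mul_rpow hc.le (le_of_lt hx)]
    ring
  have h3 := h2.const_mul ((c ^ (a-1))⁻¹)
  refine IntegrableOn.congr_fun h3 (fun x hx => ?_) measurableSet_Ioi
  have : (c:ℝ) ^ (a-1) ≠ 0 := by positivity
  field_simp

lemma inv_gamma_pt {a c : ℝ} : ∀ x ∈ Ioi (0:ℝ),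
    (|(-1:ℝ)| * x ^ ((-1:ℝ) - 1)) •
      ((x ^ (-1:ℝ)) ^ (a - 1) * Real.exp (-(c * x ^ (-1:ℝ))))
      = x ^ (-a - 1) * Real.exp (-c / x) := by
  intro x hx
  have hx0 : (0:ℝ) < x := hx
  rw [smul_eq_mul, Real.rpow_neg_one, Real.inv_rpow hx0.le, abs_neg, abs_one, one_mul,
    ← Real.rpow_neg hx0.le, ← mul_assoc, ← Real.rpow_add hx0]
  ring_nf

lemma inv_gamma_integrableOn {a c : ℝ} (ha : 0 < a) (hc : 0 < c) :
    IntegrableOn (fun t : ℝ => t ^ (-a - 1) * Real.exp (-c / t)) (Ioi 0) := by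
  have key := (integrableOn_Ioi_comp_rpow_iff
    (fun t : ℝ => t ^ (a - 1) * Real.exp (-(c * t))) (p := -1) (by norm_num)).2
    (scaled_gamma_integrable ha hc)
  exact key.congr_fun inv_gamma_pt measurableSet_Ioi

lemma inv_gamma_integral {a c : ℝ} (ha : 0 < a) (hc : 0 < c) :
    ∫ t in Ioi (0:ℝ), t ^ (-a - 1) * Real.exp (-c / t) = Real.Gamma a / c ^ a := by
  have key := integral_comp_rpow_Ioi
    (fun t : ℝ => t ^ (a - 1) * Real.exp (-(c * t))) (p := -1) (by norm_num)
  rw [← setIntegral_congr_fun measurableSet_Ioi inv_gamma_pt, key,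
    Real.integral_rpow_mul_exp_neg_mul_Ioi ha hc, one_div,
    Real.inv_rpow hc.le, inv_mul_eq_div]

lemma gauss_shift {k : ℝ} (m : ℝ) (hk : 0 < k) :
    ∫ w : ℝ, Real.exp (-(k * (w - m) ^ 2)) = Real.sqrt (π / k) := by
  have := integral_sub_right_eq_self (μ := volume) (fun w => Real.exp (-(k * w ^ 2))) m
  rw [this, ← integral_gaussian k]
  congr 1; ext x; ring_nf

lemma gauss_shift_integrable {k : ℝ} (m : ℝ) (hk : 0 < k) :
    Integrable (fun w : ℝ => Real.exp (-(k * (w - m) ^ 2))) := by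
  have := (integrable_exp_neg_mul_sq hk).comp_sub_right m
  simpa [neg_mul] using this

lemma gpdf_eq {v : ℝ} (hv : 0 < v) (m x : ℝ) :
    gpdf m v x = (2 * π * v) ^ (-(1:ℝ)/2) * Real.exp (-(x - m) ^ 2 / (2 * v)) := by
  have h2v : (0:ℝ) < 2 * π * v := by positivity
  rw [gpdf, Real.sqrt_eq_rpow, ← Real.rpow_neg h2v.le]
  norm_num

lemma prod_gpdf {n : ℕ} (m x : Fin n → ℝ) {t : ℝ} (ht : 0 < t) :
    ∏ i, gpdf (m i) t (x i) =
      (2 * π * t) ^ (-(n:ℝ)/2) * Real.exp (-(∑ i, (x i - m i) ^ 2) / (2 * t)) := by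
  have h2t : (0:ℝ) < 2 * π * t := by positivity
  calc ∏ i, gpdf (m i) t (x i)
      = ∏ i, ((2 * π * t) ^ (-(1:ℝ)/2) * Real.exp (-(x i - m i) ^ 2 / (2 * t))) := by
        exact Finset.prod_congr rfl fun i _ => gpdf_eq ht (m i) (x i)
    _ = ((2 * π * t) ^ (-(1:ℝ)/2)) ^ (n : ℕ) * Real.exp (∑ i, -(x i - m i) ^ 2 / (2 * t)) := by
        rw [Finset.prod_mul_distrib, Finset.prod_const, Real.exp_sum, Finset.card_univ,
          Fintype.card_fin]
    _ = (2 * π * t) ^ (-(n:ℝ)/2) * Real.exp (-(∑ i, (x i - m i) ^ 2) / (2 * t)) := by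
        rw [← Real.rpow_natCast ((2 * π * t) ^ (-(1:ℝ)/2)), ← Real.rpow_mul h2t.le]
        congr 1
        · congr 1; ring
        · rw [← Finset.sum_div, ← Finset.sum_neg_distrib]

lemma pos_eq_of_log {a b : ℝ} (ha : 0 < a) (hb : 0 < b)
    (h : Real.log a = Real.log b) : a = b := by
  rw [← Real.exp_log ha, ← Real.exp_log hb, h]

lemma final_alg (α β η A D S2 g1 g2 g3 g4 : ℝ) (n : ℕ)
    (hβ : 0 < β) (hη : 0 < η) (hA : 0 < A) (hD : 0 < D) (hS2 : 0 ≤ S2)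
    (hg1 : 0 < g1) (hg2 : 0 < g2) (hg3 : 0 < g3) (hg4 : 0 < g4) :
    (β ^ α / g1 * (2*π) ^ (-(n:ℝ)/2) * (2*π*η) ^ (-(1:ℝ)/2) * Real.sqrt (2*π/A) *
      (g3 / (D/(2*A)) ^ (α + (n:ℝ)/2))) *
    (β ^ (α - 1/2) / g2 * (2*π) ^ (-(n:ℝ)/2) *
      (g4 / (β + S2/2) ^ (α - 1/2 + (n:ℝ)/2)))
    = (2*β) ^ (2*α - 1/2) * g4 * g3 / (Real.sqrt η * π ^ (n:ℝ) * g1 * g2) *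
      (A ^ ((2*α + (n:ℝ) - 1)/2) /
        ((S2 + 2*β) ^ ((2*α + (n:ℝ) - 1)/2) * D ^ ((2*α + (n:ℝ))/2))) := by
  have hπ := Real.pi_pos
  have hB : 0 < S2 + 2*β := by linarith
  have hb2 : 0 < β + S2/2 := by linarith
  have hDA : 0 < D/(2*A) := by positivity
  apply pos_eq_of_log (by positivity) (by positivity)
  rw [show β + S2/2 = (S2 + 2*β)/2 by ring]
  simp (disch := positivity) only [Real.log_mul, Real.log_div, Real.log_rpow,
    Real.log_inv, Real.log_sqrt, Real.log_exp]
  ring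


end Helpers

/-- marginal likelihood of graph `G₁` in the non-identifiable
two-node model. -/
theorem stmt_10 (n : ℕ) (X1 X2 : Fin n → ℝ) (α β η : ℝ)
    (hα : 1 / 2 < α) (hβ : 0 < β) (hη : 0 < η) :
    let S1 := ∑ i, X1 i ^ 2
    let S2 := ∑ i, X2 i ^ 2
    let S12 := ∑ i, X1 i * X2 i
    let ν : ℝ := 2 * α + n
    (∫ w : ℝ, ∫ t1 in Set.Ioi (0 : ℝ), ∫ t2 in Set.Ioi (0 : ℝ),
        gpdf 0 (η * t1) w * invGammaPdf α β t1 * invGammaPdf (α - 1 / 2) β t2 *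
          ∏ i, gpdf (w * X2 i) t1 (X1 i) * gpdf 0 t2 (X2 i)) =
      (2 * β) ^ (2 * α - 1 / 2) * Real.Gamma (α + ((n : ℝ) - 1) / 2) *
          Real.Gamma (α + (n : ℝ) / 2) /
          (Real.sqrt η * Real.pi ^ (n : ℝ) * Real.Gamma α * Real.Gamma (α - 1 / 2)) *
        ((S2 + 1 / η) ^ ((ν - 1) / 2) /
          ((S2 + 2 * β) ^ ((ν - 1) / 2) *
            ((S1 + 2 * β) * (S2 + 1 / η) - S12 ^ 2) ^ (ν / 2))) := by
  intro S1 S2 S12 ν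
  have hS1_def : S1 = ∑ i, X1 i ^ 2 := rfl
  have hS2_def : S2 = ∑ i, X2 i ^ 2 := rfl
  have hS12_def : S12 = ∑ i, X1 i * X2 i := rfl
  have hS1 : 0 ≤ S1 := Finset.sum_nonneg fun i _ => sq_nonneg _
  have hS2 : 0 ≤ S2 := Finset.sum_nonneg fun i _ => sq_nonneg _
  have hCS : S12 ^ 2 ≤ S1 * S2 := Finset.sum_mul_sq_le_sq_mul_sq Finset.univ X1 X2
  set A : ℝ := S2 + 1 / η with hA_def
  set D : ℝ := (S1 + 2 * β) * A - S12 ^ 2 with hD_def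
  have hA : 0 < A := add_pos_of_nonneg_of_pos hS2 (by positivity)
  have hD : 0 < D := by
    rw [hD_def, hA_def]
    have h1 : 0 < 1 / η := by positivity
    nlinarith [hCS, mul_nonneg hS1 h1.le]
  have hc2 : 0 < D / (2 * A) := by positivity
  have hq : 0 < α + (n:ℝ)/2 := by
    have : (0:ℝ) ≤ (n:ℝ)/2 := by positivity
    linarith
  have hq' : 0 < α - 1/2 + (n:ℝ)/2 := by
    have : (0:ℝ) ≤ (n:ℝ)/2 := by positivity
    linarith
  have hc : 0 < β + S2/2 := by linarith
  -- separate the t2 integral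
  have key : ∀ w t1 t2 : ℝ,
      gpdf 0 (η * t1) w * invGammaPdf α β t1 * invGammaPdf (α - 1 / 2) β t2 *
        ∏ i, gpdf (w * X2 i) t1 (X1 i) * gpdf 0 t2 (X2 i)
      = (gpdf 0 (η * t1) w * invGammaPdf α β t1 * ∏ i, gpdf (w * X2 i) t1 (X1 i)) *
        (invGammaPdf (α - 1 / 2) β t2 * ∏ i, gpdf 0 t2 (X2 i)) := by
    intro w t1 t2
    rw [Finset.prod_mul_distrib]
    ring
  simp_rw [key, integral_const_mul, integral_mul_const]
  -- the t2 integral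
  have hI2 : (∫ t2 in Set.Ioi (0:ℝ), invGammaPdf (α - 1 / 2) β t2 * ∏ i, gpdf 0 t2 (X2 i))
      = β ^ (α - 1/2) / Real.Gamma (α - 1/2) * (2*π) ^ (-(n:ℝ)/2) *
        (Real.Gamma (α - 1/2 + (n:ℝ)/2) / (β + S2/2) ^ (α - 1/2 + (n:ℝ)/2)) := by
    have hpt : ∀ t ∈ Set.Ioi (0:ℝ), invGammaPdf (α - 1 / 2) β t * ∏ i, gpdf 0 t (X2 i)
        = (β ^ (α - 1/2) / Real.Gamma (α - 1/2) * (2*π) ^ (-(n:ℝ)/2)) *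
          (t ^ (-(α - 1/2 + (n:ℝ)/2) - 1) * Real.exp (-(β + S2/2)/t)) := by
      intro t ht
      have ht0 : (0:ℝ) < t := ht
      rw [prod_gpdf (fun _ => 0) X2 ht0, invGammaPdf]
      simp only [sub_zero]
      rw [show (2*π*t : ℝ) = (2*π)*t by ring, Real.mul_rpow (by positivity) ht0.le]
      have h1 : t ^ (-(α - 1/2 + (n:ℝ)/2) - 1) = t ^ (-(α - 1/2) - 1) * t ^ (-(n:ℝ)/2) := by
        rw [← Real.rpow_add ht0]; congr 1; ring
      have h2 : Real.exp (-(β + S2/2)/t) = Real.exp (-β/t) * Real.exp (-S2/(2*t)) := by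
        rw [← Real.exp_add]; congr 1; field_simp; ring
      rw [h1, h2, hS2_def]
      ring
    rw [setIntegral_congr_fun measurableSet_Ioi hpt, integral_const_mul,
      inv_gamma_integral hq' hc]
  rw [hI2]
  -- the (w, t1) double integral
  have hC1 : 0 < β ^ α / Real.Gamma α * (2*π) ^ (-(n:ℝ)/2) * (2*π*η) ^ (-(1:ℝ)/2) := by
    have := Real.Gamma_pos_of_pos (by linarith : 0 < α)
    positivity
  set C1 : ℝ := β ^ α / Real.Gamma α * (2*π) ^ (-(n:ℝ)/2) * (2*π*η) ^ (-(1:ℝ)/2)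
    with hC1_def
  set p : ℝ := α + (n:ℝ)/2 + 1/2 with hp_def
  set f : ℝ → ℝ → ℝ := fun w t1 =>
    C1 * (t1 ^ (-p - 1) * Real.exp (-(D/(2*A))/t1)) *
      Real.exp (-((A/(2*t1)) * (w - S12/A) ^ 2)) with hf_def
  have hQ : ∀ w : ℝ, (∑ i, (X1 i - w * X2 i) ^ 2) = S1 - 2*w*S12 + w^2*S2 := by
    intro w
    rw [hS1_def, hS12_def, hS2_def]
    rw [Finset.sum_congr rfl (fun i _ =>
      show (X1 i - w * X2 i) ^ 2 = X1 i ^ 2 - 2*w*(X1 i * X2 i) + w^2 * X2 i ^ 2 by ring)]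
    rw [Finset.sum_add_distrib, Finset.sum_sub_distrib, ← Finset.mul_sum, ← Finset.mul_sum]
  have hpt : ∀ w : ℝ, ∀ t1 ∈ Set.Ioi (0:ℝ),
      gpdf 0 (η * t1) w * invGammaPdf α β t1 * ∏ i, gpdf (w * X2 i) t1 (X1 i)
      = f w t1 := by
    intro w t1 ht1
    have ht0 : (0:ℝ) < t1 := ht1
    rw [gpdf_eq (by positivity), prod_gpdf (fun i => w * X2 i) X1 ht0, invGammaPdf, hQ w]
    rw [show (2*π*(η*t1) : ℝ) = (2*π*η)*t1 by ring,
      Real.mul_rpow (by positivity) ht0.le,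
      show (2*π*t1 : ℝ) = (2*π)*t1 by ring,
      Real.mul_rpow (by positivity) ht0.le]
    have hT : t1 ^ (-α-1) * (t1 ^ (-(1:ℝ)/2) * t1 ^ (-(n:ℝ)/2)) = t1 ^ (-p - 1) := by
      rw [← Real.rpow_add ht0, ← Real.rpow_add ht0, hp_def]; congr 1; ring
    have hE : Real.exp (-(w - 0)^2/(2*(η*t1))) * Real.exp (-β/t1) *
        Real.exp (-(S1 - 2*w*S12 + w^2*S2)/(2*t1))
        = Real.exp (-(D/(2*A))/t1) * Real.exp (-((A/(2*t1)) * (w - S12/A) ^ 2)) := by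
      rw [← Real.exp_add, ← Real.exp_add, ← Real.exp_add]
      congr 1
      rw [hD_def, hA_def]
      field_simp
      ring
    simp only [hf_def]
    calc (2 * π * η) ^ (-(1:ℝ) / 2) * t1 ^ (-(1:ℝ) / 2) *
          rexp (-(w - 0) ^ 2 / (2 * (η * t1))) *
          (β ^ α / Real.Gamma α * t1 ^ (-α - 1) * rexp (-β / t1)) *
          ((2 * π) ^ (-(n:ℝ) / 2) * t1 ^ (-(n:ℝ) / 2) *
            rexp (-(S1 - 2 * w * S12 + w ^ 2 * S2) / (2 * t1)))
        = ((2 * π * η) ^ (-(1:ℝ) / 2) * t1 ^ (-(1:ℝ) / 2) *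
            (β ^ α / Real.Gamma α * t1 ^ (-α - 1)) *
            ((2 * π) ^ (-(n:ℝ) / 2) * t1 ^ (-(n:ℝ) / 2))) *
          (rexp (-(w - 0) ^ 2 / (2 * (η * t1))) * rexp (-β / t1) *
            rexp (-(S1 - 2 * w * S12 + w ^ 2 * S2) / (2 * t1))) := by ring
      _ = ((2 * π * η) ^ (-(1:ℝ) / 2) * t1 ^ (-(1:ℝ) / 2) *
            (β ^ α / Real.Gamma α * t1 ^ (-α - 1)) *
            ((2 * π) ^ (-(n:ℝ) / 2) * t1 ^ (-(n:ℝ) / 2))) *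
          (rexp (-(D / (2 * A)) / t1) * rexp (-(A / (2 * t1) * (w - S12 / A) ^ 2))) := by
            rw [hE]
      _ = C1 * (t1 ^ (-p - 1) * rexp (-(D / (2 * A)) / t1)) *
            rexp (-(A / (2 * t1) * (w - S12 / A) ^ 2)) := by
            rw [hC1_def, ← hT]; ring
  rw [integral_congr_ae (ae_of_all _ fun w =>
    setIntegral_congr_fun measurableSet_Ioi (hpt w))]
  have hw : ∀ t1 ∈ Set.Ioi (0:ℝ), (∫ w : ℝ, f w t1)
      = (C1 * Real.sqrt (2*π/A)) *
        (t1 ^ (-(α + (n:ℝ)/2) - 1) * Real.exp (-(D/(2*A))/t1)) := by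
    intro t1 ht1
    have ht0 : (0:ℝ) < t1 := ht1
    have hk : 0 < A/(2*t1) := by positivity
    simp only [hf_def]
    rw [integral_const_mul, gauss_shift (S12/A) hk,
      show π/(A/(2*t1)) = (2*π/A)*t1 by field_simp,
      Real.sqrt_mul (by positivity) t1, Real.sqrt_eq_rpow t1]
    have hT2 : t1 ^ (-p - 1) * t1 ^ ((1:ℝ)/2) = t1 ^ (-(α + (n:ℝ)/2) - 1) := by
      rw [← Real.rpow_add ht0, hp_def]; congr 1; ring
    rw [← hT2]
    ring
  have hmeas : AEStronglyMeasurable (Function.uncurry f)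
      ((volume : Measure ℝ).prod (volume.restrict (Set.Ioi 0))) := by
    apply Measurable.aestronglyMeasurable
    simp only [hf_def, Function.uncurry]
    fun_prop
  have haeInt : ∀ᵐ t1 ∂(volume.restrict (Set.Ioi (0:ℝ))),
      Integrable (fun w => f w t1) := by
    refine (ae_restrict_iff' measurableSet_Ioi).2 (ae_of_all _ fun t1 ht1 => ?_)
    have ht0 : (0:ℝ) < t1 := ht1
    have hk : 0 < A/(2*t1) := by positivity
    simp only [hf_def]
    exact (gauss_shift_integrable (S12/A) hk).const_mul _
  have hIntNorm : Integrable (fun t1 => ∫ w, ‖f w t1‖)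
      (volume.restrict (Set.Ioi (0:ℝ))) := by
    have hg : IntegrableOn (fun t1 : ℝ => (C1 * Real.sqrt (2*π/A)) *
        (t1 ^ (-(α+(n:ℝ)/2) - 1) * Real.exp (-(D/(2*A))/t1))) (Set.Ioi 0) :=
      (inv_gamma_integrableOn hq hc2).const_mul _
    refine hg.congr ?_
    refine (ae_restrict_iff' measurableSet_Ioi).2 (ae_of_all _ fun t1 ht1 => ?_)
    have ht0 : (0:ℝ) < t1 := ht1
    have h1 : (∫ w, ‖f w t1‖) = ∫ w, f w t1 := by
      refine integral_congr_ae (ae_of_all _ fun w => ?_)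
      simp only [hf_def]
      exact Real.norm_of_nonneg (mul_nonneg (mul_nonneg hC1.le
        (mul_nonneg (Real.rpow_nonneg ht0.le _) (Real.exp_nonneg _)))
        (Real.exp_nonneg _))
    exact ((h1.trans (hw t1 ht1))).symm
  have hInt : Integrable (Function.uncurry f)
      ((volume : Measure ℝ).prod (volume.restrict (Set.Ioi 0))) :=
    (integrable_prod_iff' hmeas).2 ⟨haeInt, hIntNorm⟩
  rw [integral_integral_swap hInt,
    setIntegral_congr_fun measurableSet_Ioi hw,
    integral_const_mul, inv_gamma_integral hq hc2, hC1_def]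
  -- final algebra
  have hΓ1 := Real.Gamma_pos_of_pos (show (0:ℝ) < α by linarith)
  have hΓ2 := Real.Gamma_pos_of_pos (show (0:ℝ) < α - 1/2 by linarith)
  have hΓ3 := Real.Gamma_pos_of_pos hq
  have hΓ4 := Real.Gamma_pos_of_pos hq'
  rw [show ν = 2*α + (n:ℝ) from rfl,
    show α + ((n:ℝ) - 1)/2 = α - 1/2 + (n:ℝ)/2 by ring]
  exact final_alg α β η A D S2 (Real.Gamma α) (Real.Gamma (α - 1/2))
    (Real.Gamma (α + (n:ℝ)/2)) (Real.Gamma (α - 1/2 + (n:ℝ)/2)) n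
    hβ hη hA hD hS2 hΓ1 hΓ2 hΓ3 hΓ4
end
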